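/- For every finite graph G there is a nested set N of clique separations of G which efficiently distinguishes all the distinguishable profiles of clique separations of G: for every two distinguishable profiles P, P' of clique separations there is a clique separation in N that distinguishes P and P' and has minimum order among all clique separations of G distinguishing them. -/

import Mathlib

/-!
Every finite graph has a nested set of clique separations which efficiently
distinguishes all its distinguishable profiles of clique separations.
-/

variable {V : Type*} [Fintype V] [DecidableEq V]

/-- An oriented separation-candidate of a graph on `V`: a pair of vertex sets. -/
abbrev GSep (V : Type*) := Finset V × Finset V

/-- The involution `(A,B) ↦ (B,A)`. -/
def sepInv (p : GSep V) : GSep V := (p.2, p.1)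

/-- The partial order `(A,B) ≤ (C,D)` iff `A ⊆ C` and `B ⊇ D`. -/
def sepLE (p q : GSep V) : Prop := p.1 ⊆ q.1 ∧ q.2 ⊆ p.2

/-- Strict version of `sepLE`. -/
def sepLT (p q : GSep V) : Prop := sepLE p q ∧ p ≠ q

/-- The join `(A,B) ∨ (C,D) = (A ∪ C, B ∩ D)`. -/
def sepJoin (p q : GSep V) : GSep V := (p.1 ∪ q.1, p.2 ∩ q.2)

/-- The meet `(A,B) ∧ (C,D) = (A ∩ C, B ∪ D)`. -/
def sepMeet (p q : GSep V) : GSep V := (p.1 ∩ q.1, p.2 ∪ q.2)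

/-- The order `|(A,B)| = |A ∩ B|`. -/
def sepOrder (p : GSep V) : ℕ := (p.1 ∩ p.2).card

/-- `(A,B)` is a separation of `G`: `A ∪ B = V` and `G` has no edge between
`A \ B` and `B \ A`. -/
def IsSep (G : SimpleGraph V) (p : GSep V) : Prop :=
  p.1 ∪ p.2 = Finset.univ ∧
    ∀ a b : V, G.Adj a b → a ∈ p.1 → a ∉ p.2 → b ∈ p.2 → b ∉ p.1 → False

/-- Two separations are nested if they have `sepLE`-comparable orientations. -/
def sepNested (p q : GSep V) : Prop :=
  sepLE p q ∨ sepLE p (sepInv q) ∨ sepLE (sepInv p) q ∨ sepLE (sepInv p) (sepInv q)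

/-- `c` is a corner separation of `p` and `q`: a join of orientations of `p`
and `q`, or the involution of such a join. -/
def sepIsCorner (c p q : GSep V) : Prop :=
  ∃ p' q', (p' = p ∨ p' = sepInv p) ∧ (q' = q ∨ q' = sepInv q) ∧
    (c = sepJoin p' q' ∨ c = sepInv (sepJoin p' q'))

/-- `(A,B)` is a clique separation of `G`: a separation whose separator
`A ∩ B` induces a complete subgraph. -/
def IsCliqueSep (G : SimpleGraph V) (p : GSep V) : Prop :=
  IsSep G p ∧ G.IsClique ↑(p.1 ∩ p.2)

/-- A profile of clique separations of `G` of order `k`: a consistent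
orientation `P` of the set of clique separations of order `< k` such that for
all `r, s ∈ P` the meet `(sepInv r) ∧ (sepInv s)` is not in `P`. -/
def CliqueProfile (G : SimpleGraph V) (k : ℕ) (P : Set (GSep V)) : Prop :=
  (∀ p ∈ P, IsCliqueSep G p ∧ sepOrder p < k) ∧
  (∀ p : GSep V, IsCliqueSep G p → sepOrder p < k →
    (p ∈ P ∨ sepInv p ∈ P) ∧ (p ∈ P → sepInv p ∈ P → p = sepInv p)) ∧
  (∀ r ∈ P, ∀ s ∈ P, ¬ sepLT (sepInv r) s) ∧
  (∀ r ∈ P, ∀ s ∈ P, sepMeet (sepInv r) (sepInv s) ∉ P)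

/-- The clique separation `p` distinguishes the profiles `P` and `P'`. -/
def cliqueDistinguishes (G : SimpleGraph V) (p : GSep V)
    (P P' : Set (GSep V)) : Prop :=
  IsCliqueSep G p ∧ ((p ∈ P ∧ sepInv p ∈ P') ∨ (sepInv p ∈ P ∧ p ∈ P'))

/-- The clique separation `p` distinguishes `P` and `P'` efficiently: it does
so and has minimum order among all clique separations of `G` distinguishing
`P` and `P'`. -/
def cliqueEffDist (G : SimpleGraph V) (p : GSep V)
    (P P' : Set (GSep V)) : Prop :=
  cliqueDistinguishes G p P P' ∧
    ∀ q : GSep V, cliqueDistinguishes G q P P' → sepOrder p ≤ sepOrder q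


section Aux
set_option linter.unusedSectionVars false

variable {G : SimpleGraph V}

lemma sepInv_sepInv (p : GSep V) : sepInv (sepInv p) = p := rfl

lemma sepLE_refl (p : GSep V) : sepLE p p := ⟨Finset.Subset.refl _, Finset.Subset.refl _⟩

lemma sepLE_trans {p q r : GSep V} (h1 : sepLE p q) (h2 : sepLE q r) : sepLE p r :=
  ⟨h1.1.trans h2.1, h2.2.trans h1.2⟩

lemma sepLE_inv {p q : GSep V} (h : sepLE p q) : sepLE (sepInv q) (sepInv p) := ⟨h.2, h.1⟩

lemma sepMeet_le_left (p q : GSep V) : sepLE (sepMeet p q) p :=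
  ⟨Finset.inter_subset_left, Finset.subset_union_left⟩

lemma sepMeet_le_right (p q : GSep V) : sepLE (sepMeet p q) q :=
  ⟨Finset.inter_subset_right, Finset.subset_union_right⟩

lemma le_sepMeet {t p q : GSep V} (h1 : sepLE t p) (h2 : sepLE t q) : sepLE t (sepMeet p q) :=
  ⟨Finset.subset_inter h1.1 h2.1, Finset.union_subset h1.2 h2.2⟩

lemma sepNested_refl (p : GSep V) : sepNested p p := Or.inl (sepLE_refl p)

lemma sepNested_symm {p q : GSep V} (h : sepNested p q) : sepNested q p := by
  rcases h with h | h | h | h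
  · exact Or.inr (Or.inr (Or.inr (sepLE_inv h)))
  · exact Or.inr (Or.inl (sepLE_inv h))
  · exact Or.inr (Or.inr (Or.inl (sepLE_inv h)))
  · exact Or.inl (sepLE_inv h)

lemma sepNested_inv_right {p q : GSep V} : sepNested p (sepInv q) ↔ sepNested p q := by
  unfold sepNested
  rw [sepInv_sepInv]
  tauto

lemma sepNested_inv_left {p q : GSep V} : sepNested (sepInv p) q ↔ sepNested p q := by
  unfold sepNested
  rw [sepInv_sepInv]
  tauto

lemma sepNested_of_le {p q : GSep V} (h : sepLE p q) : sepNested p q := Or.inl h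

lemma sepOrder_inv (p : GSep V) : sepOrder (sepInv p) = sepOrder p := by
  simp [sepOrder, sepInv, Finset.inter_comm]

lemma mem_side {s : GSep V} (hs : IsSep G s) (x : V) : x ∈ s.1 ∨ x ∈ s.2 := by
  have hx : x ∈ s.1 ∪ s.2 := hs.1 ▸ Finset.mem_univ x
  simpa [Finset.mem_union] using hx

lemma isSep_inv {p : GSep V} (hp : IsSep G p) : IsSep G (sepInv p) := by
  refine ⟨?_, ?_⟩
  · rw [show (sepInv p).1 ∪ (sepInv p).2 = p.2 ∪ p.1 from rfl, Finset.union_comm]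
    exact hp.1
  · intro a b hab ha1 ha2 hb1 hb2
    exact hp.2 b a hab.symm hb1 hb2 ha1 ha2

lemma isCliqueSep_inv {p : GSep V} (hp : IsCliqueSep G p) : IsCliqueSep G (sepInv p) := by
  refine ⟨isSep_inv hp.1, ?_⟩
  have : (sepInv p).1 ∩ (sepInv p).2 = p.1 ∩ p.2 := by
    simp [sepInv, Finset.inter_comm]
  rw [this]
  exact hp.2

lemma isSep_meet {p q : GSep V} (hp : IsSep G p) (hq : IsSep G q) : IsSep G (sepMeet p q) := by
  refine ⟨?_, ?_⟩
  · apply Finset.eq_univ_iff_forall.mpr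
    intro x
    have h1 := mem_side hp x
    have h2 := mem_side hq x
    simp only [sepMeet, Finset.mem_union, Finset.mem_inter]
    tauto
  · intro a b hab ha1 ha2 hb1 hb2
    simp only [sepMeet, Finset.mem_union, Finset.mem_inter, not_or] at ha1 ha2 hb1 hb2
    by_cases hbp : b ∈ p.1
    · by_cases hbq : b ∈ q.1
      · exact hb2 ⟨hbp, hbq⟩
      · have hbq2 : b ∈ q.2 := (mem_side hq b).resolve_left hbq
        exact hq.2 a b hab ha1.2 ha2.2 hbq2 hbq
    · have hbp2 : b ∈ p.2 := (mem_side hp b).resolve_left hbp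
      exact hp.2 a b hab ha1.1 ha2.1 hbp2 hbp

/-- A clique lies entirely on one side of a separation. -/
lemma clique_side {s : GSep V} (hs : IsSep G s) {K : Finset V}
    (hK : G.IsClique (K : Set V)) : K ⊆ s.1 ∨ K ⊆ s.2 := by
  by_cases h : ∀ x ∈ K, x ∈ s.1
  · exact Or.inl (fun x hx => h x hx)
  · push_neg at h
    obtain ⟨x, hxK, hxs1⟩ := h
    have hxs2 : x ∈ s.2 := (mem_side hs x).resolve_left hxs1
    refine Or.inr (fun y hyK => ?_)
    by_contra hys2
    have hys1 : y ∈ s.1 := (mem_side hs y).resolve_right hys2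
    have hyx : y ≠ x := fun he => hxs1 (he ▸ hys1)
    have hadj : G.Adj y x := hK (Finset.mem_coe.mpr hyK) (Finset.mem_coe.mpr hxK) hyx
    exact hs.2 y x hadj hys1 hys2 hxs2 hxs1

lemma dist_symm {p : GSep V} {P P' : Set (GSep V)}
    (h : cliqueDistinguishes G p P P') : cliqueDistinguishes G p P' P := by
  obtain ⟨h1, h2⟩ := h
  exact ⟨h1, by tauto⟩

lemma eff_symm {p : GSep V} {P P' : Set (GSep V)}
    (h : cliqueEffDist G p P P') : cliqueEffDist G p P' P :=
  ⟨dist_symm h.1, fun q hq => h.2 q (dist_symm hq)⟩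

lemma profile_le_mem {k : ℕ} {Q : Set (GSep V)} {w c : GSep V}
    (hQ : CliqueProfile G k Q) (hw : w ∈ Q) (hc : IsCliqueSep G c)
    (ho : sepOrder c < k) (hle : sepLE c w) : c ∈ Q := by
  rcases (hQ.2.1 c hc ho).1 with h | h
  · exact h
  · by_cases hcw : c = w
    · exact hcw ▸ hw
    · exact absurd (show sepLT (sepInv (sepInv c)) w from ⟨hle, hcw⟩)
        (hQ.2.2.1 (sepInv c) h w hw)

/-- The key corner lemma (one-sided version): if `s ∈ Q`, `sepInv s ∈ Q'`,
`s` has minimal order among distinguishers of `Q, Q'`, and the separator of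
the clique separation `r` lies in `s.2`, then one of the two corners
`sepMeet r s`, `sepMeet (sepInv r) s` efficiently distinguishes `Q` and `Q'`. -/
lemma key_corner {k k' : ℕ} {Q Q' : Set (GSep V)} {r s : GSep V}
    (hQ : CliqueProfile G k Q) (hQ' : CliqueProfile G k' Q')
    (hr : IsCliqueSep G r) (hs : IsCliqueSep G s)
    (hsQ : s ∈ Q) (hsQ' : sepInv s ∈ Q')
    (hmin : ∀ q, cliqueDistinguishes G q Q Q' → sepOrder s ≤ sepOrder q)
    (hside : r.1 ∩ r.2 ⊆ s.2) :
    ∃ c, (c = sepMeet r s ∨ c = sepMeet (sepInv r) s) ∧ cliqueEffDist G c Q Q' := by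
  have hk : sepOrder s < k := (hQ.1 s hsQ).2
  have hk' : sepOrder s < k' := by
    have := (hQ'.1 _ hsQ').2
    rwa [sepOrder_inv] at this
  have hside' : ∀ x : V, x ∈ r.1 → x ∈ r.2 → x ∈ s.2 := fun x h1 h2 =>
    hside (Finset.mem_inter.mpr ⟨h1, h2⟩)
  -- separator bounds for the two corners
  have hsep1 : (sepMeet r s).1 ∩ (sepMeet r s).2 ⊆ s.1 ∩ s.2 := by
    intro x hx
    simp only [sepMeet, Finset.mem_inter, Finset.mem_union] at hx ⊢
    have := hside' x
    tauto
  have hsep2 : (sepMeet (sepInv r) s).1 ∩ (sepMeet (sepInv r) s).2 ⊆ s.1 ∩ s.2 := by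
    intro x hx
    simp only [sepMeet, sepInv, Finset.mem_inter, Finset.mem_union] at hx ⊢
    have := hside' x
    tauto
  have hcl1 : IsCliqueSep G (sepMeet r s) :=
    ⟨isSep_meet hr.1 hs.1, hs.2.subset (Finset.coe_subset.mpr hsep1)⟩
  have hcl2 : IsCliqueSep G (sepMeet (sepInv r) s) :=
    ⟨isSep_meet (isSep_inv hr.1) hs.1, hs.2.subset (Finset.coe_subset.mpr hsep2)⟩
  have ho1 : sepOrder (sepMeet r s) ≤ sepOrder s := Finset.card_le_card hsep1
  have ho2 : sepOrder (sepMeet (sepInv r) s) ≤ sepOrder s := Finset.card_le_card hsep2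
  have hm1Q : sepMeet r s ∈ Q :=
    profile_le_mem hQ hsQ hcl1 (lt_of_le_of_lt ho1 hk) (sepMeet_le_right r s)
  have hm2Q : sepMeet (sepInv r) s ∈ Q :=
    profile_le_mem hQ hsQ hcl2 (lt_of_le_of_lt ho2 hk) (sepMeet_le_right (sepInv r) s)
  -- a corner `c` of order ≤ |s| with `c ∈ Q` and `sepInv c ∈ Q'` gives the result
  have finish : ∀ c, (c = sepMeet r s ∨ c = sepMeet (sepInv r) s) → IsCliqueSep G c →
      sepOrder c ≤ sepOrder s → c ∈ Q → sepInv c ∈ Q' →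
      ∃ c', (c' = sepMeet r s ∨ c' = sepMeet (sepInv r) s) ∧ cliqueEffDist G c' Q Q' := by
    intro c hcor hccl hco hcQ hcQ'
    have hdist : cliqueDistinguishes G c Q Q' := ⟨hccl, Or.inl ⟨hcQ, hcQ'⟩⟩
    exact ⟨c, hcor, hdist, fun q hq => le_trans hco (hmin q hq)⟩
  by_cases h1 : sepMeet r s ∈ Q'
  · by_cases h2 : sepMeet (sepInv r) s ∈ Q'
    · exfalso
      have hnot := hQ'.2.2.2 _ h1 _ h2
      have hmeet : sepMeet (sepInv (sepMeet r s)) (sepInv (sepMeet (sepInv r) s)) = sepInv s := by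
        have hru := mem_side hr.1
        refine Prod.ext ?_ ?_
        · apply Finset.ext
          intro x
          have h3 := hside' x
          simp only [sepMeet, sepInv, Finset.mem_inter, Finset.mem_union]
          tauto
        · apply Finset.ext
          intro x
          have h4 := hru x
          simp only [sepMeet, sepInv, Finset.mem_inter, Finset.mem_union]
          tauto
      rw [hmeet] at hnot
      exact hnot hsQ'
    · have := (hQ'.2.1 _ hcl2 (lt_of_le_of_lt ho2 hk')).1.resolve_left h2
      exact finish _ (Or.inr rfl) hcl2 ho2 hm2Q this
  · have := (hQ'.2.1 _ hcl1 (lt_of_le_of_lt ho1 hk')).1.resolve_left h1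
    exact finish _ (Or.inl rfl) hcl1 ho1 hm1Q this

/-- `c` is one of the four "meet-corners" of `r` and `s`. -/
def IsMeetCorner (c r s : GSep V) : Prop :=
  ∃ r' s', (r' = r ∨ r' = sepInv r) ∧ (s' = s ∨ s' = sepInv s) ∧ c = sepMeet r' s'

lemma meetCorner_nested_left {c r s : GSep V} (h : IsMeetCorner c r s) : sepNested c r := by
  obtain ⟨r', s', hr', _, hc⟩ := h
  rcases hr' with rfl | rfl
  · exact hc ▸ sepNested_of_le (sepMeet_le_left r' s')
  · exact sepNested_inv_right.mp (hc ▸ sepNested_of_le (sepMeet_le_left _ s'))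

/-- For crossing `r, s`: everything nested with both `r` and `s` is nested
with `sepMeet r s`. -/
lemma sepNested_meet {r s t : GSep V} (hcross : ¬ sepNested r s)
    (h1 : sepNested t r) (h2 : sepNested t s) : sepNested t (sepMeet r s) := by
  have hm1 : sepLE (sepMeet r s) r := sepMeet_le_left r s
  have hm2 : sepLE (sepMeet r s) s := sepMeet_le_right r s
  rcases h1 with h1 | h1 | h1 | h1 <;> rcases h2 with h2 | h2 | h2 | h2
  -- h1 : t ≤ r
  · exact Or.inl (le_sepMeet h1 h2)
  · exact Or.inr (Or.inl (sepLE_trans h2 (sepLE_inv hm2)))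
  · exact absurd (Or.inr (Or.inr (Or.inl ⟨h1.2.trans h2.1, h2.2.trans h1.1⟩))) hcross
  · exact Or.inr (Or.inr (Or.inr (sepLE_inv (sepLE_trans hm2 (show sepLE s t from sepLE_inv h2)))))
  -- h1 : t ≤ sepInv r
  · exact Or.inr (Or.inl (sepLE_trans h1 (sepLE_inv hm1)))
  · exact Or.inr (Or.inl (sepLE_trans h1 (sepLE_inv hm1)))
  · exact Or.inr (Or.inl (sepLE_trans h1 (sepLE_inv hm1)))
  · exact Or.inr (Or.inl (sepLE_trans h1 (sepLE_inv hm1)))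
  -- h1 : sepInv t ≤ r
  · exact absurd (Or.inr (Or.inr (Or.inl ⟨h1.2.trans h2.1, h2.2.trans h1.1⟩))) hcross
  · exact Or.inr (Or.inl (sepLE_trans h2 (sepLE_inv hm2)))
  · exact Or.inr (Or.inr (Or.inl (le_sepMeet h1 h2)))
  · exact Or.inr (Or.inr (Or.inr (sepLE_inv (sepLE_trans hm2 (show sepLE s t from sepLE_inv h2)))))
  -- h1 : sepInv t ≤ sepInv r, i.e. r ≤ t
  · exact Or.inr (Or.inr (Or.inr (sepLE_inv (sepLE_trans hm1 (show sepLE r t from sepLE_inv h1)))))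
  · exact Or.inr (Or.inr (Or.inr (sepLE_inv (sepLE_trans hm1 (show sepLE r t from sepLE_inv h1)))))
  · exact Or.inr (Or.inr (Or.inr (sepLE_inv (sepLE_trans hm1 (show sepLE r t from sepLE_inv h1)))))
  · exact Or.inr (Or.inr (Or.inr (sepLE_inv (sepLE_trans hm1 (show sepLE r t from sepLE_inv h1)))))

lemma meetCorner_nested {c r s t : GSep V} (hcross : ¬ sepNested r s)
    (h1 : sepNested t r) (h2 : sepNested t s) (hc : IsMeetCorner c r s) :
    sepNested t c := by
  obtain ⟨r', s', hr', hs', rfl⟩ := hc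
  have h1' : sepNested t r' := by
    rcases hr' with rfl | rfl
    · exact h1
    · exact sepNested_inv_right.mpr h1
  have h2' : sepNested t s' := by
    rcases hs' with rfl | rfl
    · exact h2
    · exact sepNested_inv_right.mpr h2
  have hcross' : ¬ sepNested r' s' := by
    intro hn
    apply hcross
    rcases hr' with rfl | rfl <;> rcases hs' with rfl | rfl
    · exact hn
    · exact sepNested_inv_right.mp hn
    · exact sepNested_inv_left.mp hn
    · exact sepNested_inv_left.mp (sepNested_inv_right.mp hn)
  exact sepNested_meet hcross' h1' h2'

/-- The full corner-swap lemma: for any clique separation `r` and any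
efficient distinguisher `s` of two profiles, some meet-corner of `r` and `s`
also efficiently distinguishes them. -/
lemma exists_corner_eff {k k' : ℕ} {Q Q' : Set (GSep V)} {r s : GSep V}
    (hQ : CliqueProfile G k Q) (hQ' : CliqueProfile G k' Q')
    (hr : IsCliqueSep G r) (heff : cliqueEffDist G s Q Q') :
    ∃ c, IsMeetCorner c r s ∧ cliqueEffDist G c Q Q' := by
  obtain ⟨⟨hs, hmem⟩, hmin⟩ := heff
  have hsinv : IsCliqueSep G (sepInv s) := isCliqueSep_inv hs
  have hmin' : ∀ q, cliqueDistinguishes G q Q' Q → sepOrder s ≤ sepOrder q :=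
    fun q hq => hmin q (dist_symm hq)
  have hmininv : ∀ q, cliqueDistinguishes G q Q Q' → sepOrder (sepInv s) ≤ sepOrder q := by
    intro q hq; rw [sepOrder_inv]; exact hmin q hq
  have hmininv' : ∀ q, cliqueDistinguishes G q Q' Q → sepOrder (sepInv s) ≤ sepOrder q := by
    intro q hq; rw [sepOrder_inv]; exact hmin' q hq
  rcases clique_side hs.1 hr.2 with hsideK | hsideK
  -- separator of r inside s.1 or s.2
  · -- inside s.1 = (sepInv s).2
    rcases hmem with ⟨hsQ, hsQ'⟩ | ⟨hsQ, hsQ'⟩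
    · -- s ∈ Q, inv s ∈ Q' ; apply key lemma to (Q', Q) with sepInv s
      obtain ⟨c, hcor, hceff⟩ := key_corner hQ' hQ hr hsinv hsQ'
        (show sepInv (sepInv s) ∈ Q from hsQ) hmininv' hsideK
      rcases hcor with rfl | rfl
      · exact ⟨_, ⟨r, sepInv s, Or.inl rfl, Or.inr rfl, rfl⟩, eff_symm hceff⟩
      · exact ⟨_, ⟨sepInv r, sepInv s, Or.inr rfl, Or.inr rfl, rfl⟩, eff_symm hceff⟩
    · -- inv s ∈ Q, s ∈ Q' ; apply key lemma to (Q, Q') with sepInv s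
      obtain ⟨c, hcor, hceff⟩ := key_corner hQ hQ' hr hsinv hsQ
        (show sepInv (sepInv s) ∈ Q' from hsQ') hmininv hsideK
      rcases hcor with rfl | rfl
      · exact ⟨_, ⟨r, sepInv s, Or.inl rfl, Or.inr rfl, rfl⟩, hceff⟩
      · exact ⟨_, ⟨sepInv r, sepInv s, Or.inr rfl, Or.inr rfl, rfl⟩, hceff⟩
  · -- inside s.2
    rcases hmem with ⟨hsQ, hsQ'⟩ | ⟨hsQ, hsQ'⟩
    · obtain ⟨c, hcor, hceff⟩ := key_corner hQ hQ' hr hs hsQ hsQ' hmin hsideK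
      rcases hcor with rfl | rfl
      · exact ⟨_, ⟨r, s, Or.inl rfl, Or.inl rfl, rfl⟩, hceff⟩
      · exact ⟨_, ⟨sepInv r, s, Or.inr rfl, Or.inl rfl, rfl⟩, hceff⟩
    · obtain ⟨c, hcor, hceff⟩ := key_corner hQ' hQ hr hs hsQ' hsQ hmin' hsideK
      rcases hcor with rfl | rfl
      · exact ⟨_, ⟨r, s, Or.inl rfl, Or.inl rfl, rfl⟩, eff_symm hceff⟩
      · exact ⟨_, ⟨sepInv r, s, Or.inr rfl, Or.inl rfl, rfl⟩, eff_symm hceff⟩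

/-- Greedy construction of a nested set hitting the efficient-distinguisher
sets of a finite collection of profile pairs. -/
lemma exists_nested_finset (G : SimpleGraph V)
    (T : Finset (Set (GSep V) × Set (GSep V))) :
    ∃ N : Finset (GSep V),
      (∀ p ∈ N, IsCliqueSep G p) ∧
      (∀ p ∈ N, ∀ q ∈ N, sepNested p q) ∧
      ∀ t ∈ T, (∃ k k', CliqueProfile G k t.1 ∧ CliqueProfile G k' t.2 ∧
          ∃ c, cliqueDistinguishes G c t.1 t.2) →
        ∃ p ∈ N, cliqueEffDist G p t.1 t.2 := by
  classical
  induction T using Finset.induction_on with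
  | empty => exact ⟨∅, by simp, by simp, by simp⟩
  | insert _ _ hnotmem ih =>
    rename_i t T
    obtain ⟨N, hN1, hN2, hN3⟩ := ih
    by_cases ht : ∃ k k', CliqueProfile G k t.1 ∧ CliqueProfile G k' t.2 ∧
        ∃ c, cliqueDistinguishes G c t.1 t.2
    · obtain ⟨k, k', hP, hP', c₀, hc₀⟩ := ht
      -- an efficient distinguisher exists: take one of minimal order
      have hDne : (Finset.univ.filter
          (fun p => cliqueDistinguishes G p t.1 t.2)).Nonempty :=
        ⟨c₀, by simp [hc₀]⟩
      obtain ⟨q₀, hq₀mem, hq₀min⟩ := Finset.exists_min_image _ sepOrder hDne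
      have hq₀ : cliqueEffDist G q₀ t.1 t.2 :=
        ⟨(Finset.mem_filter.mp hq₀mem).2, fun q hq => hq₀min q (by simp [hq])⟩
      -- among all efficient distinguishers take one with fewest crossings with N
      have hEDne : (Finset.univ.filter
          (fun p => cliqueEffDist G p t.1 t.2)).Nonempty := ⟨q₀, by simp [hq₀]⟩
      obtain ⟨a, haED, hamin⟩ := Finset.exists_min_image _
        (fun p => (N.filter (fun q => ¬ sepNested p q)).card) hEDne
      have haeff : cliqueEffDist G a t.1 t.2 := (Finset.mem_filter.mp haED).2
      have hnest : ∀ q ∈ N, sepNested a q := by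
        by_contra hcon
        push_neg at hcon
        obtain ⟨q, hqN, hqa⟩ := hcon
        have hcross : ¬ sepNested q a := fun h => hqa (sepNested_symm h)
        obtain ⟨c, hcor, hceff⟩ := exists_corner_eff hP hP' (hN1 q hqN) haeff
        have hcED : c ∈ Finset.univ.filter
            (fun p => cliqueEffDist G p t.1 t.2) := by simp [hceff]
        have hqfil : q ∈ N.filter (fun x => ¬ sepNested a x) :=
          Finset.mem_filter.mpr ⟨hqN, hqa⟩
        have hsub : N.filter (fun x => ¬ sepNested c x) ⊆
            (N.filter (fun x => ¬ sepNested a x)).erase q := by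
          intro x hx
          obtain ⟨hxN, hxc⟩ := Finset.mem_filter.mp hx
          refine Finset.mem_erase.mpr ⟨?_, Finset.mem_filter.mpr ⟨hxN, ?_⟩⟩
          · rintro rfl
            exact hxc (meetCorner_nested_left hcor)
          · intro hax
            exact hxc (sepNested_symm
              (meetCorner_nested hcross (hN2 x hxN q hqN) (sepNested_symm hax) hcor))
        have hlt : (N.filter (fun x => ¬ sepNested c x)).card <
            (N.filter (fun x => ¬ sepNested a x)).card :=
          lt_of_le_of_lt (Finset.card_le_card hsub) (Finset.card_erase_lt_of_mem hqfil)
        exact absurd (hamin c hcED) (not_le.mpr hlt)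
      refine ⟨insert a N, ?_, ?_, ?_⟩
      · intro x hx
        rcases Finset.mem_insert.mp hx with hx' | hx'
        · exact hx' ▸ haeff.1.1
        · exact hN1 x hx'
      · intro x hx y hy
        rcases Finset.mem_insert.mp hx with hx' | hx' <;>
          rcases Finset.mem_insert.mp hy with hy' | hy'
        · rw [hx', hy']; exact sepNested_refl a
        · rw [hx']; exact hnest y hy'
        · rw [hy']; exact sepNested_symm (hnest x hx')
        · exact hN2 x hx' y hy'
      · intro u hu htask
        rcases Finset.mem_insert.mp hu with hu' | hu'
        · rw [hu']; exact ⟨a, Finset.mem_insert_self a N, haeff⟩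
        · obtain ⟨p, hpN, hpe⟩ := hN3 u hu' htask
          exact ⟨p, Finset.mem_insert_of_mem hpN, hpe⟩
    · refine ⟨N, hN1, hN2, ?_⟩
      intro u hu htask
      rcases Finset.mem_insert.mp hu with rfl | hu
      · exact absurd htask ht
      · exact hN3 u hu htask

end Aux

/-- **Every finite graph has a nested set of clique separations efficiently
distinguishing all of its distinguishable profiles of clique separations.** -/
theorem clique_tree_of_tangles (G : SimpleGraph V) :
    ∃ N : Set (GSep V),
      (∀ p ∈ N, IsCliqueSep G p) ∧
      (∀ p ∈ N, ∀ q ∈ N, sepNested p q) ∧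
      ∀ (k k' : ℕ) (P P' : Set (GSep V)),
        CliqueProfile G k P → CliqueProfile G k' P' →
        (∃ c, cliqueDistinguishes G c P P') →
        ∃ p ∈ N, cliqueEffDist G p P P' := by
  classical
  obtain ⟨N, h1, h2, h3⟩ := exists_nested_finset G (Finset.univ)
  refine ⟨(N : Set (GSep V)), fun p hp => h1 p hp, fun p hp q hq => h2 p hp q hq, ?_⟩
  intro k k' P P' hP hP' hdist
  obtain ⟨p, hpN, hpe⟩ := h3 (P, P') (Finset.mem_univ _) ⟨k, k', hP, hP', hdist⟩
  exact ⟨p, hpN, hpe⟩
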